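/- Suppose the Euler–Lagrange equation at the zero function holds: f_y(x,0,0) − (d/dx)[f_z(x,0,0)] = 0 for all x ∈ [a,b]. If p > 0, q < 0, and b − a < (π/4)·√(p/|q|), then there exists ε > 0 such that for every y ∈ C¹[a,b] with y(a)=y(b)=0 and max_{x∈[a,b]} max(|y(x)|,|y'(x)|) < ε one has Φ(y) − Φ(0) ≥ ((π²·p − 16(b−a)²·|q|) / (2(π² + 16(b−a)²)))·‖y‖²_{H¹[a,b]}. -/

import Mathlib

open Set MeasureTheory intervalIntegral

/-- Partial derivative of `f` with respect to the second argument `y`. -/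
noncomputable def fy (f : ℝ → ℝ → ℝ → ℝ) (x y z : ℝ) : ℝ :=
  deriv (fun u => f x u z) y

/-- Partial derivative of `f` with respect to the third argument `z`. -/
noncomputable def fz (f : ℝ → ℝ → ℝ → ℝ) (x y z : ℝ) : ℝ :=
  deriv (fun u => f x y u) z

/-- Second partial derivative `f_{yy}`. -/
noncomputable def fyy (f : ℝ → ℝ → ℝ → ℝ) (x y z : ℝ) : ℝ :=
  deriv (fun u => fy f x u z) y

/-- Mixed second partial derivative `f_{yz}`. -/
noncomputable def fyz (f : ℝ → ℝ → ℝ → ℝ) (x y z : ℝ) : ℝ :=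
  deriv (fun u => fz f x u z) y

/-- Second partial derivative `f_{zz}`. -/
noncomputable def fzz (f : ℝ → ℝ → ℝ → ℝ) (x y z : ℝ) : ℝ :=
  deriv (fun u => fz f x y u) z

/-- The Euler–Lagrange variational functional `Φ(y) = ∫_a^b f(x, y, y') dx`. -/
noncomputable def Phi (f : ℝ → ℝ → ℝ → ℝ) (a b : ℝ) (y : ℝ → ℝ) : ℝ :=
  ∫ x in a..b, f x (y x) (deriv y x)

/-- The square of the Sobolev `H¹[a,b]` norm of `y`. -/
noncomputable def H1normSq (a b : ℝ) (y : ℝ → ℝ) : ℝ :=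
  ∫ x in a..b, ((y x) ^ 2 + (deriv y x) ^ 2)

noncomputable section Helpers

variable {W : Type*} [NormedAddCommGroup W] [NormedSpace ℝ W]

lemma secX (g : ℝ × ℝ × ℝ → W) (hg : Differentiable ℝ g) (x y z : ℝ) :
    HasDerivAt (fun t => g (t, y, z)) (fderiv ℝ g (x, y, z) (1, 0, 0)) x := by
  have hline : HasDerivAt (fun t : ℝ => ((t, y, z) : ℝ × ℝ × ℝ)) (1, 0, 0) x :=
    (hasDerivAt_id x).prodMk ((hasDerivAt_const x y).prodMk (hasDerivAt_const x z))
  simpa [Function.comp_def] using (hg (x, y, z)).hasFDerivAt.comp_hasDerivAt x hline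

lemma secY (g : ℝ × ℝ × ℝ → W) (hg : Differentiable ℝ g) (x y z : ℝ) :
    HasDerivAt (fun u => g (x, u, z)) (fderiv ℝ g (x, y, z) (0, 1, 0)) y := by
  have hline : HasDerivAt (fun u : ℝ => ((x, u, z) : ℝ × ℝ × ℝ)) (0, 1, 0) y :=
    (hasDerivAt_const y x).prodMk ((hasDerivAt_id y).prodMk (hasDerivAt_const y z))
  simpa [Function.comp_def] using (hg (x, y, z)).hasFDerivAt.comp_hasDerivAt y hline

lemma secZ (g : ℝ × ℝ × ℝ → W) (hg : Differentiable ℝ g) (x y z : ℝ) :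
    HasDerivAt (fun w => g (x, y, w)) (fderiv ℝ g (x, y, z) (0, 0, 1)) z := by
  have hline : HasDerivAt (fun w : ℝ => ((x, y, w) : ℝ × ℝ × ℝ)) (0, 0, 1) z :=
    (hasDerivAt_const z x).prodMk ((hasDerivAt_const z y).prodMk (hasDerivAt_id z))
  simpa [Function.comp_def] using (hg (x, y, z)).hasFDerivAt.comp_hasDerivAt z hline

lemma secD (g : ℝ × ℝ × ℝ → W) (hg : Differentiable ℝ g) (x u v t₀ : ℝ) :
    HasDerivAt (fun t => g (x, t * u, t * v)) (fderiv ℝ g (x, t₀ * u, t₀ * v) (0, u, v)) t₀ := by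
  have hline : HasDerivAt (fun t : ℝ => ((x, t * u, t * v) : ℝ × ℝ × ℝ)) (0, u, v) t₀ :=
    (hasDerivAt_const t₀ x).prodMk ((hasDerivAt_mul_const u).prodMk (hasDerivAt_mul_const v))
  simpa [Function.comp_def] using (hg (x, t₀ * u, t₀ * v)).hasFDerivAt.comp_hasDerivAt t₀ hline

end Helpers

noncomputable section Idents

/-- uncurried version of `f` -/
def Fu (f : ℝ → ℝ → ℝ → ℝ) : ℝ × ℝ × ℝ → ℝ := fun pt => f pt.1 pt.2.1 pt.2.2

/-- first total derivative -/
def Gu (f : ℝ → ℝ → ℝ → ℝ) : ℝ × ℝ × ℝ → (ℝ × ℝ × ℝ →L[ℝ] ℝ) := fderiv ℝ (Fu f)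

/-- second total derivative -/
def Hu (f : ℝ → ℝ → ℝ → ℝ) : ℝ × ℝ × ℝ → (ℝ × ℝ × ℝ →L[ℝ] ℝ × ℝ × ℝ →L[ℝ] ℝ) :=
  fderiv ℝ (Gu f)

variable {f : ℝ → ℝ → ℝ → ℝ}

lemma fy_eq (hf : Differentiable ℝ (Fu f)) (x y z : ℝ) :
    fy f x y z = Gu f (x, y, z) (0, 1, 0) :=
  (secY (Fu f) hf x y z).deriv

lemma fz_eq (hf : Differentiable ℝ (Fu f)) (x y z : ℝ) :
    fz f x y z = Gu f (x, y, z) (0, 0, 1) :=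
  (secZ (Fu f) hf x y z).deriv

lemma fyy_eq (hf : Differentiable ℝ (Fu f)) (hG : Differentiable ℝ (Gu f)) (x y z : ℝ) :
    fyy f x y z = Hu f (x, y, z) (0, 1, 0) (0, 1, 0) := by
  have hfun : (fun u => fy f x u z) = fun u => Gu f (x, u, z) (0, 1, 0) :=
    funext fun u => fy_eq hf x u z
  have h2 : HasDerivAt (fun u => Gu f (x, u, z) ((0 : ℝ), (1 : ℝ), (0 : ℝ)))
      (Hu f (x, y, z) (0, 1, 0) (0, 1, 0)) y := by
    simpa [Hu] using (secY (Gu f) hG x y z).clm_apply (hasDerivAt_const y ((0 : ℝ), (1 : ℝ), (0 : ℝ)))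
  rw [fyy, hfun]
  exact h2.deriv

lemma fyz_eq (hf : Differentiable ℝ (Fu f)) (hG : Differentiable ℝ (Gu f)) (x y z : ℝ) :
    fyz f x y z = Hu f (x, y, z) (0, 1, 0) (0, 0, 1) := by
  have hfun : (fun u => fz f x u z) = fun u => Gu f (x, u, z) (0, 0, 1) :=
    funext fun u => fz_eq hf x u z
  have h2 : HasDerivAt (fun u => Gu f (x, u, z) ((0 : ℝ), (0 : ℝ), (1 : ℝ)))
      (Hu f (x, y, z) (0, 1, 0) (0, 0, 1)) y := by
    simpa [Hu] using (secY (Gu f) hG x y z).clm_apply (hasDerivAt_const y ((0 : ℝ), (0 : ℝ), (1 : ℝ)))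
  rw [fyz, hfun]
  exact h2.deriv

lemma fzz_eq (hf : Differentiable ℝ (Fu f)) (hG : Differentiable ℝ (Gu f)) (x y z : ℝ) :
    fzz f x y z = Hu f (x, y, z) (0, 0, 1) (0, 0, 1) := by
  have hfun : (fun w => fz f x y w) = fun w => Gu f (x, y, w) (0, 0, 1) :=
    funext fun w => fz_eq hf x y w
  have h2 : HasDerivAt (fun w => Gu f (x, y, w) ((0 : ℝ), (0 : ℝ), (1 : ℝ)))
      (Hu f (x, y, z) (0, 0, 1) (0, 0, 1)) z := by
    simpa [Hu] using (secZ (Gu f) hG x y z).clm_apply (hasDerivAt_const z ((0 : ℝ), (0 : ℝ), (1 : ℝ)))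
  rw [fzz, hfun]
  exact h2.deriv

lemma hasDerivAt_fz_line (hf : Differentiable ℝ (Fu f)) (hG : Differentiable ℝ (Gu f)) (x : ℝ) :
    HasDerivAt (fun t => fz f t 0 0) (Hu f (x, 0, 0) (1, 0, 0) (0, 0, 1)) x := by
  have hfun : (fun t => fz f t 0 0) = fun t => Gu f (t, 0, 0) (0, 0, 1) :=
    funext fun t => fz_eq hf t 0 0
  rw [hfun]
  simpa [Hu] using (secX (Gu f) hG x 0 0).clm_apply (hasDerivAt_const x ((0 : ℝ), (0 : ℝ), (1 : ℝ)))

/-- uncurried version of `fyz f` -/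
def Zu (f : ℝ → ℝ → ℝ → ℝ) : ℝ × ℝ × ℝ → ℝ := fun pt => fyz f pt.1 pt.2.1 pt.2.2

lemma hasDerivAt_fyz_line (hZ : Differentiable ℝ (Zu f)) (x : ℝ) :
    HasDerivAt (fun t => fyz f t 0 0) (fderiv ℝ (Zu f) (x, 0, 0) (1, 0, 0)) x :=
  secX (Zu f) hZ x 0 0

/-- symmetry of second derivative -/
lemma symm2 (hf : Differentiable ℝ (Fu f)) (hG : Differentiable ℝ (Gu f))
    (pt : ℝ × ℝ × ℝ) (v w : ℝ × ℝ × ℝ) :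
    Hu f pt v w = Hu f pt w v :=
  second_derivative_symmetric (fun y => (hf y).hasFDerivAt) ((hG pt).hasFDerivAt) v w

end Idents

noncomputable section Remainder

variable {f : ℝ → ℝ → ℝ → ℝ}

lemma remainder_eq (hf : ContDiff ℝ 2 (Fu f)) (x u v : ℝ) :
    f x u v - f x 0 0 - Gu f (x, 0, 0) (0, u, v)
      = ∫ t in (0:ℝ)..1, (1 - t) * (Hu f (x, t * u, t * v) (0, u, v) (0, u, v)) := by
  have hFd : Differentiable ℝ (Fu f) := hf.differentiable (by norm_num)
  have hG1 : ContDiff ℝ 1 (Gu f) := hf.fderiv_right (le_refl 2)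
  have hGd : Differentiable ℝ (Gu f) := hG1.differentiable (by norm_num)
  have hGc : Continuous (Gu f) := hG1.continuous
  have hHc : Continuous (Hu f) := hG1.continuous_fderiv (by norm_num)
  have hγc : Continuous (fun t : ℝ => ((x, t * u, t * v) : ℝ × ℝ × ℝ)) := by fun_prop
  have hφ'c : Continuous (fun t : ℝ => Gu f (x, t * u, t * v) (0, u, v)) :=
    (hGc.comp hγc).clm_apply continuous_const
  have hψc : Continuous (fun t : ℝ => Hu f (x, t * u, t * v) (0, u, v) (0, u, v)) :=
    (((hHc.comp hγc).clm_apply continuous_const).clm_apply continuous_const)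
  have hφ : ∀ t : ℝ, HasDerivAt (fun s => Fu f (x, s * u, s * v))
      (Gu f (x, t * u, t * v) (0, u, v)) t := fun t => secD (Fu f) hFd x u v t
  have hψd : ∀ t : ℝ, HasDerivAt (fun s => Gu f (x, s * u, s * v) ((0:ℝ), u, v))
      (Hu f (x, t * u, t * v) (0, u, v) (0, u, v)) t := fun t => by
    simpa [Hu] using (secD (Gu f) hGd x u v t).clm_apply (hasDerivAt_const t ((0:ℝ), u, v))
  have hFTC : ∫ t in (0:ℝ)..1, Gu f (x, t * u, t * v) (0, u, v)
      = Fu f (x, 1 * u, 1 * v) - Fu f (x, 0 * u, 0 * v) :=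
    intervalIntegral.integral_eq_sub_of_hasDerivAt (fun t _ => hφ t)
      (hφ'c.intervalIntegrable 0 1)
  have hparts := intervalIntegral.integral_mul_deriv_eq_deriv_mul
    (u := fun t : ℝ => 1 - t) (u' := fun _ : ℝ => (-1 : ℝ))
    (v := fun t : ℝ => Gu f (x, t * u, t * v) ((0:ℝ), u, v))
    (v' := fun t : ℝ => Hu f (x, t * u, t * v) (0, u, v) (0, u, v))
    (a := (0:ℝ)) (b := (1:ℝ))
    (fun t _ => by simpa using (hasDerivAt_id t).const_sub 1)
    (fun t _ => hψd t)
    ((continuous_const).intervalIntegrable 0 1)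
    (hψc.intervalIntegrable 0 1)
  have hInt : ∫ t in (0:ℝ)..1, (-1 : ℝ) * (Gu f (x, t * u, t * v) ((0:ℝ), u, v))
      = -(Fu f (x, 1 * u, 1 * v) - Fu f (x, 0 * u, 0 * v)) := by
    rw [intervalIntegral.integral_const_mul, hFTC]; ring
  rw [hparts, hInt]
  have h1 : Fu f (x, 1 * u, 1 * v) = f x u v := by norm_num [Fu]
  have h0 : Fu f (x, 0 * u, 0 * v) = f x 0 0 := by norm_num [Fu]
  have h0' : Gu f (x, 0 * u, 0 * v) ((0:ℝ), u, v) = Gu f (x, 0, 0) (0, u, v) := by norm_num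
  rw [h1, h0]
  beta_reduce
  rw [h0']
  ring

end Remainder

section Poincare

lemma poincare (a b : ℝ) (hab : a < b) (y : ℝ → ℝ) (hy : ContDiff ℝ 1 y)
    (ha : y a = 0) (hb : y b = 0) :
    ∫ x in a..b, (y x) ^ 2 ≤ (b - a) ^ 2 * ∫ x in a..b, (deriv y x) ^ 2 := by
  set L := b - a with hL
  have hL0 : 0 < L := by simp [hL]; linarith
  have hyc : Continuous y := hy.continuous
  have hy'c : Continuous (deriv y) := hy.continuous_deriv le_rfl
  have hder : ∀ x : ℝ, HasDerivAt (fun s => (y s) ^ 2) (2 * y x * deriv y x) x := by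
    intro x
    have h1 : HasDerivAt y (deriv y x) x := (hy.differentiable (by norm_num) x).hasDerivAt
    simpa [mul_comm, mul_assoc, mul_left_comm, Pi.pow_def] using h1.pow 2
  have h2c : Continuous (fun s => 2 * y s * deriv y s) := by fun_prop
  have hgc : Continuous (fun s => (1 / L) * (y s) ^ 2 + L * (deriv y s) ^ 2) := by fun_prop
  have hgnn : ∀ s : ℝ, 0 ≤ (1 / L) * (y s) ^ 2 + L * (deriv y s) ^ 2 := fun s => by positivity
  have hkey : ∀ A B : ℝ, 2 * A * B ≤ (1 / L) * A ^ 2 + L * B ^ 2 := by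
    intro A B
    rw [← sub_nonneg]
    have hrw : (1 / L) * A ^ 2 + L * B ^ 2 - 2 * A * B = (A - L * B) ^ 2 / L := by
      field_simp; ring
    rw [hrw]; positivity
  have hkey' : ∀ A B : ℝ, -(2 * A * B) ≤ (1 / L) * A ^ 2 + L * B ^ 2 := by
    intro A B
    have := hkey A (-B)
    simpa [mul_comm, mul_assoc] using this
  set m := (a + b) / 2 with hm
  have ham : a ≤ m := by simp [hm]; linarith
  have hmb : m ≤ b := by simp [hm]; linarith
  set Ml := ∫ s in a..m, ((1 / L) * (y s) ^ 2 + L * (deriv y s) ^ 2) with hMl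
  set Mr := ∫ s in m..b, ((1 / L) * (y s) ^ 2 + L * (deriv y s) ^ 2) with hMr
  -- left half sup bound
  have hsupl : ∀ x ∈ Icc a m, (y x) ^ 2 ≤ Ml := by
    intro x hx
    have hFTC : ∫ s in a..x, 2 * y s * deriv y s = (y x) ^ 2 := by
      rw [intervalIntegral.integral_eq_sub_of_hasDerivAt (fun s _ => hder s)
        (h2c.intervalIntegrable a x), ha]
      ring
    rw [← hFTC]
    calc ∫ s in a..x, 2 * y s * deriv y s
        ≤ ∫ s in a..x, ((1 / L) * (y s) ^ 2 + L * (deriv y s) ^ 2) :=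
          intervalIntegral.integral_mono_on hx.1 (h2c.intervalIntegrable a x)
            (hgc.intervalIntegrable a x) (fun s _ => hkey (y s) (deriv y s))
      _ ≤ Ml :=
          intervalIntegral.integral_mono_interval le_rfl hx.1 hx.2
            (Filter.Eventually.of_forall fun s => hgnn s) (hgc.intervalIntegrable a m)
  have hsupr : ∀ x ∈ Icc m b, (y x) ^ 2 ≤ Mr := by
    intro x hx
    have hFTC : ∫ s in x..b, -(2 * y s * deriv y s) = (y x) ^ 2 := by
      have hneg : ∀ s : ℝ, HasDerivAt (fun s => -((y s) ^ 2)) (-(2 * y s * deriv y s)) s :=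
        fun s => (hder s).neg
      rw [intervalIntegral.integral_eq_sub_of_hasDerivAt (fun s _ => hneg s)
        ((h2c.neg).intervalIntegrable x b), hb]
      ring
    rw [← hFTC]
    calc ∫ s in x..b, -(2 * y s * deriv y s)
        ≤ ∫ s in x..b, ((1 / L) * (y s) ^ 2 + L * (deriv y s) ^ 2) :=
          intervalIntegral.integral_mono_on hx.2 ((h2c.neg).intervalIntegrable x b)
            (hgc.intervalIntegrable x b) (fun s _ => hkey' (y s) (deriv y s))
      _ ≤ Mr :=
          intervalIntegral.integral_mono_interval hx.1 hx.2 le_rfl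
            (Filter.Eventually.of_forall fun s => hgnn s) (hgc.intervalIntegrable m b)
  -- integrate the sup bounds
  have hy2c : Continuous (fun s => (y s) ^ 2) := by fun_prop
  have hy'2c : Continuous (fun s => (deriv y s) ^ 2) := by fun_prop
  have htl : ∫ s in a..m, (y s) ^ 2 ≤ (m - a) * Ml := by
    calc ∫ s in a..m, (y s) ^ 2 ≤ ∫ _ in a..m, Ml :=
          intervalIntegral.integral_mono_on ham (hy2c.intervalIntegrable a m)
            (intervalIntegrable_const) hsupl
      _ = (m - a) * Ml := by simp [smul_eq_mul]
  have htr : ∫ s in m..b, (y s) ^ 2 ≤ (b - m) * Mr := by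
    calc ∫ s in m..b, (y s) ^ 2 ≤ ∫ _ in m..b, Mr :=
          intervalIntegral.integral_mono_on hmb (hy2c.intervalIntegrable m b)
            (intervalIntegrable_const) hsupr
      _ = (b - m) * Mr := by simp [smul_eq_mul]
  have hMlval : Ml = (1 / L) * (∫ s in a..m, (y s) ^ 2) + L * ∫ s in a..m, (deriv y s) ^ 2 := by
    rw [hMl, intervalIntegral.integral_add (f := fun s => 1 / L * y s ^ 2) (g := fun s => L * deriv y s ^ 2) ((continuous_const.mul hy2c).intervalIntegrable a m)
      ((continuous_const.mul hy'2c).intervalIntegrable a m),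
      intervalIntegral.integral_const_mul, intervalIntegral.integral_const_mul]
  have hMrval : Mr = (1 / L) * (∫ s in m..b, (y s) ^ 2) + L * ∫ s in m..b, (deriv y s) ^ 2 := by
    rw [hMr, intervalIntegral.integral_add (f := fun s => 1 / L * y s ^ 2) (g := fun s => L * deriv y s ^ 2) ((continuous_const.mul hy2c).intervalIntegrable m b)
      ((continuous_const.mul hy'2c).intervalIntegrable m b),
      intervalIntegral.integral_const_mul, intervalIntegral.integral_const_mul]
  have hma : m - a = L / 2 := by rw [hm, hL]; ring
  have hbm : b - m = L / 2 := by rw [hm, hL]; ring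
  set tl := ∫ s in a..m, (y s) ^ 2 with htldef
  set tr := ∫ s in m..b, (y s) ^ 2 with htrdef
  set sl := ∫ s in a..m, (deriv y s) ^ 2 with hsldef
  set sr := ∫ s in m..b, (deriv y s) ^ 2 with hsrdef
  have hsplit1 : ∫ s in a..b, (y s) ^ 2 = tl + tr :=
    (intervalIntegral.integral_add_adjacent_intervals (hy2c.intervalIntegrable a m)
      (hy2c.intervalIntegrable m b)).symm
  have hsplit2 : ∫ s in a..b, (deriv y s) ^ 2 = sl + sr :=
    (intervalIntegral.integral_add_adjacent_intervals (hy'2c.intervalIntegrable a m)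
      (hy'2c.intervalIntegrable m b)).symm
  clear_value L m Ml Mr tl tr sl sr
  have htlf : tl ≤ L ^ 2 * sl := by
    rw [hMlval, hma] at htl
    have hexp : L / 2 * ((1 / L) * tl + L * sl) = tl / 2 + L ^ 2 / 2 * sl := by
      field_simp
    rw [hexp] at htl
    nlinarith [htl]
  have htrf : tr ≤ L ^ 2 * sr := by
    rw [hMrval, hbm] at htr
    have hexp : L / 2 * ((1 / L) * tr + L * sr) = tr / 2 + L ^ 2 / 2 * sr := by
      field_simp
    rw [hexp] at htr
    nlinarith [htr]
  rw [hsplit1, hsplit2]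
  calc tl + tr ≤ L ^ 2 * sl + L ^ 2 * sr := add_le_add htlf htrf
    _ = L ^ 2 * (sl + sr) := by ring

end Poincare

section Algebra

lemma lin1 (B : ℝ × ℝ × ℝ →L[ℝ] ℝ) (u v : ℝ) :
    B (0, u, v) = u * B (0, 1, 0) + v * B (0, 0, 1) := by
  have hw : ((0:ℝ), u, v) = u • ((0:ℝ), (1:ℝ), (0:ℝ)) + v • ((0:ℝ), (0:ℝ), (1:ℝ)) := by
    simp [Prod.ext_iff]
  rw [hw, map_add, _root_.map_smul, _root_.map_smul, smul_eq_mul, smul_eq_mul]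

lemma bilin (B : ℝ × ℝ × ℝ →L[ℝ] ℝ × ℝ × ℝ →L[ℝ] ℝ) (u v : ℝ)
    (hsym : B (0, 0, 1) (0, 1, 0) = B (0, 1, 0) (0, 0, 1)) :
    B (0, u, v) (0, u, v) = B (0, 1, 0) (0, 1, 0) * u ^ 2
      + 2 * B (0, 1, 0) (0, 0, 1) * (u * v) + B (0, 0, 1) (0, 0, 1) * v ^ 2 := by
  have hw : ((0:ℝ), u, v) = u • ((0:ℝ), (1:ℝ), (0:ℝ)) + v • ((0:ℝ), (0:ℝ), (1:ℝ)) := by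
    simp [Prod.ext_iff]
  rw [hw]
  simp only [map_add, _root_.map_smul, ContinuousLinearMap.add_apply,
    ContinuousLinearMap.smul_apply, smul_eq_mul]
  rw [hsym]
  ring

lemma arith_final (p q L t s η P : ℝ) (hL : 0 < L) (hp : 0 < p) (hq : q < 0)
    (hP0 : 0 < P) (hP16 : P < 16) (ht : 0 ≤ t) (hs : 0 ≤ s) (hts : t ≤ L ^ 2 * s)
    (hη : η = (p - q) * (16 - P) * L ^ 2 / ((P + 16 * L ^ 2) * (1 + L ^ 2))) :
    (P * p - 16 * L ^ 2 * |q|) / (2 * (P + 16 * L ^ 2)) * (t + s)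
      ≤ 1 / 2 * (q * t + p * s) - η / 2 * (t + s) := by
  have habs : |q| = -q := abs_of_neg hq
  rw [habs]
  have hD0 : 0 < P + 16 * L ^ 2 := by positivity
  have hZ0 : 0 < 1 + L ^ 2 := by positivity
  have hη0 : 0 ≤ η := by
    rw [hη]
    apply div_nonneg _ (le_of_lt (by positivity))
    have h1 : 0 ≤ p - q := by linarith
    have h2 : 0 ≤ 16 - P := by linarith
    positivity
  have h1 : t + s ≤ (1 + L ^ 2) * s := by nlinarith
  have hA : η * (t + s) ≤ (p - q) * (16 - P) * L ^ 2 / (P + 16 * L ^ 2) * s := by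
    calc η * (t + s) ≤ η * ((1 + L ^ 2) * s) := by
          exact mul_le_mul_of_nonneg_left h1 hη0
      _ = (p - q) * (16 - P) * L ^ 2 / (P + 16 * L ^ 2) * s := by
          rw [hη]; field_simp
  have hB : (P * p - 16 * L ^ 2 * (-q)) / (2 * (P + 16 * L ^ 2)) * (t + s)
      ≤ 1 / 2 * (q * t + p * s)
        - 1 / 2 * ((p - q) * (16 - P) * L ^ 2 / (P + 16 * L ^ 2) * s) := by
    rw [div_mul_eq_mul_div, div_le_iff₀ (by positivity)]
    have hid : (1 / 2 * (q * t + p * s)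
        - 1 / 2 * ((p - q) * (16 - P) * L ^ 2 / (P + 16 * L ^ 2) * s)) * (2 * (P + 16 * L ^ 2))
        = (P + 16 * L ^ 2) * (q * t + p * s) - (p - q) * (16 - P) * L ^ 2 * s := by
      field_simp
    rw [hid]
    have h16 : (16 - P) * L ^ 2 * s ≤ 16 * L ^ 2 * s - P * t := by
      have := mul_le_mul_of_nonneg_left hts (le_of_lt hP0)
      nlinarith
    have hkey2 : (p - q) * ((16 - P) * L ^ 2 * s) ≤ (p - q) * (16 * L ^ 2 * s - P * t) :=
      mul_le_mul_of_nonneg_left h16 (by linarith)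
    nlinarith [hkey2]
  linarith [hA, hB]

end Algebra

set_option maxHeartbeats 10000000 in
theorem statement4
    (a b : ℝ) (hab : a < b)
    (f : ℝ → ℝ → ℝ → ℝ)
    (hf : ContDiff ℝ 2 (fun pt : ℝ × ℝ × ℝ => f pt.1 pt.2.1 pt.2.2))
    (hfyz : ContDiff ℝ 1 (fun pt : ℝ × ℝ × ℝ => fyz f pt.1 pt.2.1 pt.2.2))
    (hEL : ∀ x ∈ Set.Icc a b, fy f x 0 0 - deriv (fun t => fz f t 0 0) x = 0)
    (p q : ℝ)
    (hp : IsLeast ((fun x => fzz f x 0 0) '' Set.Icc a b) p)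
    (hq : IsLeast ((fun x => fyy f x 0 0 - deriv (fun t => fyz f t 0 0) x) '' Set.Icc a b) q)
    (hppos : 0 < p) (hqneg : q < 0)
    (hlen : b - a < Real.pi / 4 * Real.sqrt (p / |q|)) :
    ∃ ε > 0, ∀ y : ℝ → ℝ, ContDiff ℝ 1 y → y a = 0 → y b = 0 →
      (∀ x ∈ Set.Icc a b, max |y x| |deriv y x| < ε) →
      Phi f a b y - Phi f a b (fun _ => 0) ≥
        (Real.pi ^ 2 * p - 16 * (b - a) ^ 2 * |q|) / (2 * (Real.pi ^ 2 + 16 * (b - a) ^ 2)) *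
          H1normSq a b y := by
  have hFc : ContDiff ℝ 2 (Fu f) := hf
  have hFd : Differentiable ℝ (Fu f) := hFc.differentiable (by norm_num)
  have hG1 : ContDiff ℝ 1 (Gu f) := hFc.fderiv_right (le_refl 2)
  have hGd : Differentiable ℝ (Gu f) := hG1.differentiable (by norm_num)
  have hGc : Continuous (Gu f) := hG1.continuous
  have hHc : Continuous (Hu f) := hG1.continuous_fderiv (by norm_num)
  have hZc1 : ContDiff ℝ 1 (Zu f) := hfyz
  have hZd : Differentiable ℝ (Zu f) := hZc1.differentiable (by norm_num)
  have hZ'c : Continuous (fderiv ℝ (Zu f)) := hZc1.continuous_fderiv (by norm_num)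
  have hlinec : Continuous (fun x : ℝ => ((x, 0, 0) : ℝ × ℝ × ℝ)) := by fun_prop
  -- continuity of coefficient functions
  have hfyc : Continuous (fun x : ℝ => fy f x 0 0) := by
    have h : (fun x : ℝ => fy f x 0 0) = fun x => Gu f (x, 0, 0) (0, 1, 0) :=
      funext fun x => fy_eq hFd x 0 0
    rw [h]; exact (hGc.comp hlinec).clm_apply continuous_const
  have hfzc : Continuous (fun x : ℝ => fz f x 0 0) := by
    have h : (fun x : ℝ => fz f x 0 0) = fun x => Gu f (x, 0, 0) (0, 0, 1) :=
      funext fun x => fz_eq hFd x 0 0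
    rw [h]; exact (hGc.comp hlinec).clm_apply continuous_const
  have hβ'c : Continuous (fun x : ℝ => Hu f (x, 0, 0) (1, 0, 0) (0, 0, 1)) :=
    ((hHc.comp hlinec).clm_apply continuous_const).clm_apply continuous_const
  have hfyyc : Continuous (fun x : ℝ => fyy f x 0 0) := by
    have h : (fun x : ℝ => fyy f x 0 0) = fun x => Hu f (x, 0, 0) (0, 1, 0) (0, 1, 0) :=
      funext fun x => fyy_eq hFd hGd x 0 0
    rw [h]; exact ((hHc.comp hlinec).clm_apply continuous_const).clm_apply continuous_const
  have hfyzc : Continuous (fun x : ℝ => fyz f x 0 0) := hZc1.continuous.comp hlinec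
  have hfzzc : Continuous (fun x : ℝ => fzz f x 0 0) := by
    have h : (fun x : ℝ => fzz f x 0 0) = fun x => Hu f (x, 0, 0) (0, 0, 1) (0, 0, 1) :=
      funext fun x => fzz_eq hFd hGd x 0 0
    rw [h]; exact ((hHc.comp hlinec).clm_apply continuous_const).clm_apply continuous_const
  have hc'c : Continuous (fun x : ℝ => fderiv ℝ (Zu f) (x, 0, 0) (1, 0, 0)) :=
    (hZ'c.comp hlinec).clm_apply continuous_const
  have hπ16 : Real.pi ^ 2 < 16 := by nlinarith [Real.pi_lt_d2, Real.pi_pos]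
  obtain ⟨η, hηdef, hηpos⟩ : ∃ η : ℝ,
      η = (p - q) * (16 - Real.pi ^ 2) * (b - a) ^ 2
        / ((Real.pi ^ 2 + 16 * (b - a) ^ 2) * (1 + (b - a) ^ 2)) ∧ 0 < η := by
    refine ⟨_, rfl, ?_⟩
    have h1 : 0 < p - q := by linarith
    have h2 : 0 < 16 - Real.pi ^ 2 := by linarith
    have h3 : 0 < (b - a) ^ 2 := pow_pos (by linarith) 2
    have h4 : 0 < Real.pi ^ 2 + 16 * (b - a) ^ 2 := by positivity
    have h5 : 0 < 1 + (b - a) ^ 2 := by positivity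
    exact div_pos (mul_pos (mul_pos h1 h2) h3) (mul_pos h4 h5)
  -- uniform continuity of the second derivative on a compact box
  have hK : IsCompact ((Icc a b) ×ˢ ((Icc (-1:ℝ) 1) ×ˢ (Icc (-1:ℝ) 1))) :=
    isCompact_Icc.prod (isCompact_Icc.prod isCompact_Icc)
  have hUC : @UniformContinuousOn (ℝ × ℝ × ℝ) (ℝ × ℝ × ℝ →L[ℝ] ℝ × ℝ × ℝ →L[ℝ] ℝ)
      PseudoMetricSpace.toUniformSpace PseudoMetricSpace.toUniformSpace (Hu f)
      ((Icc a b) ×ˢ ((Icc (-1:ℝ) 1) ×ˢ (Icc (-1:ℝ) 1))) :=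
    hK.uniformContinuousOn_of_continuous hHc.continuousOn
  obtain ⟨δ, hδ0, hδ⟩ := (Metric.uniformContinuousOn_iff.mp hUC) η hηpos
  refine ⟨min δ 1, lt_min hδ0 one_pos, ?_⟩
  intro y hy hya hyb hsmall
  -- pointwise second-order Taylor lower bound
  have key : ∀ x ∈ Icc a b, ∀ u v : ℝ, |u| < min δ 1 → |v| < min δ 1 →
      fy f x 0 0 * u + fz f x 0 0 * v
        + 1 / 2 * (fyy f x 0 0 * u ^ 2 + 2 * fyz f x 0 0 * (u * v) + fzz f x 0 0 * v ^ 2)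
        - η / 2 * (u ^ 2 + v ^ 2) ≤ f x u v - f x 0 0 := by
    intro x hx u v hu hv
    have hu1 : |u| ≤ 1 := le_of_lt (lt_of_lt_of_le hu (min_le_right _ _))
    have hv1 : |v| ≤ 1 := le_of_lt (lt_of_lt_of_le hv (min_le_right _ _))
    have huδ : |u| < δ := lt_of_lt_of_le hu (min_le_left _ _)
    have hvδ : |v| < δ := lt_of_lt_of_le hv (min_le_left _ _)
    have hγc : Continuous (fun t : ℝ => ((x, t * u, t * v) : ℝ × ℝ × ℝ)) := by fun_prop
    have hψc : Continuous (fun t : ℝ => Hu f (x, t * u, t * v) (0, u, v) (0, u, v)) :=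
      ((hHc.comp hγc).clm_apply continuous_const).clm_apply continuous_const
    have hwnorm : ‖((0:ℝ), u, v)‖ * ‖((0:ℝ), u, v)‖ ≤ u ^ 2 + v ^ 2 := by
      have h1 : ‖((0:ℝ), u, v)‖ ≤ max |u| |v| := by
        rw [Prod.norm_def]
        apply max_le
        · simp [le_max_iff, abs_nonneg]
        · rw [Prod.norm_def]; simp [Real.norm_eq_abs]
      have h2 : (0:ℝ) ≤ max |u| |v| := le_max_of_le_left (abs_nonneg u)
      have h3 : ‖((0:ℝ), u, v)‖ * ‖((0:ℝ), u, v)‖ ≤ max |u| |v| * max |u| |v| :=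
        mul_le_mul h1 h1 (norm_nonneg _) h2
      refine le_trans h3 ?_
      rcases max_cases |u| |v| with ⟨hm, _⟩ | ⟨hm, _⟩ <;> rw [hm] <;>
        nlinarith [sq_nonneg u, sq_nonneg v, sq_abs u, sq_abs v]
    have hmem0 : ((x, 0, 0) : ℝ × ℝ × ℝ) ∈ (Icc a b) ×ˢ ((Icc (-1:ℝ) 1) ×ˢ (Icc (-1:ℝ) 1)) :=
      ⟨hx, ⟨by norm_num, by norm_num⟩, ⟨by norm_num, by norm_num⟩⟩
    have hmemt : ∀ t ∈ Icc (0:ℝ) 1,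
        ((x, t * u, t * v) : ℝ × ℝ × ℝ) ∈ (Icc a b) ×ˢ ((Icc (-1:ℝ) 1) ×ˢ (Icc (-1:ℝ) 1)) := by
      intro t ht
      have habs_t : |t| ≤ 1 := abs_le.mpr ⟨by linarith [ht.1], ht.2⟩
      have htu : |t * u| ≤ 1 := by
        rw [abs_mul]
        calc |t| * |u| ≤ 1 * 1 := mul_le_mul habs_t hu1 (abs_nonneg u) zero_le_one
          _ = 1 := by norm_num
      have htv : |t * v| ≤ 1 := by
        rw [abs_mul]
        calc |t| * |v| ≤ 1 * 1 := mul_le_mul habs_t hv1 (abs_nonneg v) zero_le_one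
          _ = 1 := by norm_num
      exact ⟨hx, abs_le.mp htu, abs_le.mp htv⟩
    have hdist : ∀ t ∈ Icc (0:ℝ) 1,
        dist ((x, t * u, t * v) : ℝ × ℝ × ℝ) ((x, 0, 0) : ℝ × ℝ × ℝ) < δ := by
      intro t ht
      have habs_t : |t| ≤ 1 := abs_le.mpr ⟨by linarith [ht.1], ht.2⟩
      rw [Prod.dist_eq, Prod.dist_eq]
      have h1 : dist (t * u) 0 < δ := by
        rw [Real.dist_eq, sub_zero, abs_mul]
        calc |t| * |u| ≤ 1 * |u| := mul_le_mul_of_nonneg_right habs_t (abs_nonneg u)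
          _ = |u| := one_mul _
          _ < δ := huδ
      have h2 : dist (t * v) 0 < δ := by
        rw [Real.dist_eq, sub_zero, abs_mul]
        calc |t| * |v| ≤ 1 * |v| := mul_le_mul_of_nonneg_right habs_t (abs_nonneg v)
          _ = |v| := one_mul _
          _ < δ := hvδ
      exact max_lt (by simpa [dist_self] using hδ0) (max_lt h1 h2)
    have hlow : ∀ t ∈ Icc (0:ℝ) 1,
        Hu f (x, 0, 0) (0, u, v) (0, u, v) - η * (u ^ 2 + v ^ 2)
          ≤ Hu f (x, t * u, t * v) (0, u, v) (0, u, v) := by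
      intro t ht
      have hd0 := hδ _ (hmemt t ht) _ hmem0 (hdist t ht)
      have hd : ‖Hu f (x, t * u, t * v) - Hu f (x, 0, 0)‖ < η := by convert hd0 using 1; exact (dist_eq_norm (Hu f (x, t * u, t * v)) (Hu f (x, 0, 0))).symm
      have hsub : Hu f (x, t * u, t * v) (0, u, v) (0, u, v)
          - Hu f (x, 0, 0) (0, u, v) (0, u, v)
          = ((Hu f (x, t * u, t * v) - Hu f (x, 0, 0)) (0, u, v)) (0, u, v) := by
        simp [ContinuousLinearMap.sub_apply]
      have habs : |((Hu f (x, t * u, t * v) - Hu f (x, 0, 0)) (0, u, v)) (0, u, v)|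
          ≤ η * (u ^ 2 + v ^ 2) := by
        calc |((Hu f (x, t * u, t * v) - Hu f (x, 0, 0)) (0, u, v)) (0, u, v)|
            ≤ ‖(Hu f (x, t * u, t * v) - Hu f (x, 0, 0)) (0, u, v)‖ * ‖((0:ℝ), u, v)‖ := by
              simpa [Real.norm_eq_abs] using
                ContinuousLinearMap.le_opNorm
                  ((Hu f (x, t * u, t * v) - Hu f (x, 0, 0)) (0, u, v)) ((0:ℝ), u, v)
          _ ≤ (‖Hu f (x, t * u, t * v) - Hu f (x, 0, 0)‖ * ‖((0:ℝ), u, v)‖) * ‖((0:ℝ), u, v)‖ :=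
              mul_le_mul_of_nonneg_right (ContinuousLinearMap.le_opNorm _ _) (norm_nonneg _)
          _ = ‖Hu f (x, t * u, t * v) - Hu f (x, 0, 0)‖ * (‖((0:ℝ), u, v)‖ * ‖((0:ℝ), u, v)‖) := by
              ring
          _ ≤ η * (u ^ 2 + v ^ 2) := by
              apply mul_le_mul hd.le hwnorm (by positivity) (le_of_lt hηpos)
      have hneg := neg_abs_le (((Hu f (x, t * u, t * v) - Hu f (x, 0, 0)) (0, u, v)) (0, u, v))
      linarith [hsub, habs, hneg]
    have hmono : ∫ t in (0:ℝ)..1,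
          (1 - t) * (Hu f (x, 0, 0) (0, u, v) (0, u, v) - η * (u ^ 2 + v ^ 2))
        ≤ ∫ t in (0:ℝ)..1, (1 - t) * (Hu f (x, t * u, t * v) (0, u, v) (0, u, v)) := by
      apply intervalIntegral.integral_mono_on zero_le_one
        (((continuous_const.sub continuous_id).mul continuous_const).intervalIntegrable 0 1)
        (((continuous_const.sub continuous_id).mul hψc).intervalIntegrable 0 1)
      intro t ht
      have h1t : (0:ℝ) ≤ 1 - t := by linarith [ht.2]
      exact mul_le_mul_of_nonneg_left (hlow t ht) h1t
    have hconst : ∫ t in (0:ℝ)..1,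
          (1 - t) * (Hu f (x, 0, 0) (0, u, v) (0, u, v) - η * (u ^ 2 + v ^ 2))
        = (Hu f (x, 0, 0) (0, u, v) (0, u, v) - η * (u ^ 2 + v ^ 2)) / 2 := by
      rw [intervalIntegral.integral_mul_const]
      have h12 : ∫ t in (0:ℝ)..1, (1 - t) = 1 / 2 := by
        have hprim : ∀ t : ℝ, HasDerivAt (fun t : ℝ => t - t ^ 2 / 2) (1 - t) t := by
          intro t
          have h1 := (hasDerivAt_pow 2 t).div_const 2
          have h2 := (hasDerivAt_id t).sub h1
          norm_num at h2
          exact h2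
        rw [intervalIntegral.integral_eq_sub_of_hasDerivAt (fun t _ => hprim t)
          ((continuous_const.sub continuous_id).intervalIntegrable 0 1)]
        norm_num
      rw [h12]; ring
    have hrem := remainder_eq hFc x u v
    have hGw : Gu f (x, 0, 0) ((0:ℝ), u, v) = u * fy f x 0 0 + v * fz f x 0 0 := by
      rw [lin1 (Gu f (x, 0, 0)) u v, ← fy_eq hFd, ← fz_eq hFd]
    have hΨ0 : Hu f (x, 0, 0) ((0:ℝ), u, v) ((0:ℝ), u, v)
        = fyy f x 0 0 * u ^ 2 + 2 * fyz f x 0 0 * (u * v) + fzz f x 0 0 * v ^ 2 := by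
      rw [bilin (Hu f (x, 0, 0)) u v (symm2 hFd hGd (x, 0, 0) ((0:ℝ),(0:ℝ),(1:ℝ)) ((0:ℝ),(1:ℝ),(0:ℝ))),
        ← fyy_eq hFd hGd, ← fyz_eq hFd hGd, ← fzz_eq hFd hGd]
    linarith [hrem, hmono, hconst, hGw, hΨ0]
  -- continuity facts for y
  have hyc : Continuous y := hy.continuous
  have hy'c : Continuous (deriv y) := hy.continuous_deriv le_rfl
  have hyder : ∀ x : ℝ, HasDerivAt y (deriv y x) x :=
    fun x => (hy.differentiable (by norm_num) x).hasDerivAt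
  have hy2der : ∀ x : ℝ, HasDerivAt (fun s => (y s) ^ 2) (2 * y x * deriv y x) x := by
    intro x
    simpa [mul_comm, mul_assoc, mul_left_comm, Pi.pow_def] using (hyder x).pow 2
  have hdiffc : Continuous (fun x => f x (y x) (deriv y x)) :=
    hFc.continuous.comp (continuous_id.prodMk (hyc.prodMk hy'c))
  have hf00c : Continuous (fun x : ℝ => f x 0 0) := hFc.continuous.comp hlinec
  have hy2c : Continuous (fun x => (y x) ^ 2) := by fun_prop
  have hy'2c : Continuous (fun x => (deriv y x) ^ 2) := by fun_prop
  obtain ⟨t, htdef⟩ : ∃ t : ℝ, t = ∫ x in a..b, (y x) ^ 2 := ⟨_, rfl⟩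
  obtain ⟨s, hsdef⟩ : ∃ s : ℝ, s = ∫ x in a..b, (deriv y x) ^ 2 := ⟨_, rfl⟩
  have ht0 : 0 ≤ t := by
    rw [htdef]; exact intervalIntegral.integral_nonneg hab.le (fun x _ => sq_nonneg _)
  have hs0 : 0 ≤ s := by
    rw [hsdef]; exact intervalIntegral.integral_nonneg hab.le (fun x _ => sq_nonneg _)
  have hts : t ≤ (b - a) ^ 2 * s := by
    rw [htdef, hsdef]; exact poincare a b hab y hy hya hyb
  have hH1 : H1normSq a b y = t + s := by
    rw [H1normSq, htdef, hsdef,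
      intervalIntegral.integral_add (hy2c.intervalIntegrable a b)
        (hy'2c.intervalIntegrable a b)]
  have hPhi0 : Phi f a b (fun _ => 0) = ∫ x in a..b, f x 0 0 := by
    simp [Phi]
  have hPhidiff : Phi f a b y - Phi f a b (fun _ => 0)
      = ∫ x in a..b, (f x (y x) (deriv y x) - f x 0 0) := by
    rw [Phi, hPhi0, ← intervalIntegral.integral_sub (hdiffc.intervalIntegrable a b)
      (hf00c.intervalIntegrable a b)]
  -- first-order term vanishes by Euler-Lagrange
  have hW1int : ∫ x in a..b, (fy f x 0 0 * y x + fz f x 0 0 * deriv y x) = 0 := by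
    have hparts := intervalIntegral.integral_mul_deriv_eq_deriv_mul
      (u := fun x => fz f x 0 0) (u' := fun x => Hu f (x, 0, 0) (1, 0, 0) (0, 0, 1))
      (v := y) (v' := deriv y)
      (fun x _ => hasDerivAt_fz_line hFd hGd x) (fun x _ => hyder x)
      (hβ'c.intervalIntegrable a b) (hy'c.intervalIntegrable a b)
    beta_reduce at hparts
    rw [hya, hyb] at hparts
    have hcong : ∫ x in a..b, fy f x 0 0 * y x
        = ∫ x in a..b, Hu f (x, 0, 0) (1, 0, 0) (0, 0, 1) * y x := by
      apply intervalIntegral.integral_congr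
      intro x hx
      rw [Set.uIcc_of_le hab.le] at hx
      have h := hEL x hx
      rw [(hasDerivAt_fz_line hFd hGd x).deriv] at h
      have heq : fy f x 0 0 = Hu f (x, 0, 0) (1, 0, 0) (0, 0, 1) := by linarith
      show fy f x 0 0 * y x = Hu f (x, 0, 0) (1, 0, 0) (0, 0, 1) * y x
      rw [heq]
    rw [intervalIntegral.integral_add (f := fun x => fy f x 0 0 * y x) (g := fun x => fz f x 0 0 * deriv y x) ((hfyc.mul hyc).intervalIntegrable a b)
      ((hfzc.mul hy'c).intervalIntegrable a b), hparts, hcong]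
    ring
  -- cross term by parts
  have h2yyc : Continuous (fun x => 2 * y x * deriv y x) := by fun_prop
  have hW3int : ∫ x in a..b, fyz f x 0 0 * (y x * deriv y x)
      = -(1 / 2) * ∫ x in a..b, fderiv ℝ (Zu f) (x, 0, 0) (1, 0, 0) * (y x) ^ 2 := by
    have hparts := intervalIntegral.integral_mul_deriv_eq_deriv_mul
      (u := fun x => fyz f x 0 0) (u' := fun x => fderiv ℝ (Zu f) (x, 0, 0) (1, 0, 0))
      (v := fun x => (y x) ^ 2) (v' := fun x => 2 * y x * deriv y x)
      (fun x _ => hasDerivAt_fyz_line hZd x) (fun x _ => hy2der x)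
      (hc'c.intervalIntegrable a b) (h2yyc.intervalIntegrable a b)
    beta_reduce at hparts
    rw [hya, hyb] at hparts
    have hhalf : (fun x => fyz f x 0 0 * (y x * deriv y x))
        = fun x => (1 / 2) * (fyz f x 0 0 * (2 * y x * deriv y x)) := by
      funext x; ring
    rw [hhalf, intervalIntegral.integral_const_mul, hparts]
    ring
  -- second-order coefficient bounds
  have hqbound : q * t ≤ (∫ x in a..b, fyy f x 0 0 * (y x) ^ 2)
      - ∫ x in a..b, fderiv ℝ (Zu f) (x, 0, 0) (1, 0, 0) * (y x) ^ 2 := by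
    have e : (fun x => (fyy f x 0 0 - fderiv ℝ (Zu f) (x, 0, 0) (1, 0, 0)) * (y x) ^ 2)
        = fun x => fyy f x 0 0 * (y x) ^ 2
          - fderiv ℝ (Zu f) (x, 0, 0) (1, 0, 0) * (y x) ^ 2 := by
      funext x; ring
    have h1 : ∫ x in a..b, (fyy f x 0 0 - fderiv ℝ (Zu f) (x, 0, 0) (1, 0, 0)) * (y x) ^ 2
        = (∫ x in a..b, fyy f x 0 0 * (y x) ^ 2)
          - ∫ x in a..b, fderiv ℝ (Zu f) (x, 0, 0) (1, 0, 0) * (y x) ^ 2 := by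
      rw [e, intervalIntegral.integral_sub (f := fun x => fyy f x 0 0 * (y x) ^ 2) (g := fun x => fderiv ℝ (Zu f) (x, 0, 0) (1, 0, 0) * (y x) ^ 2) ((hfyyc.mul hy2c).intervalIntegrable a b)
        ((hc'c.mul hy2c).intervalIntegrable a b)]
    rw [← h1, htdef, ← intervalIntegral.integral_const_mul]
    apply intervalIntegral.integral_mono_on hab.le
      ((continuous_const.mul hy2c).intervalIntegrable a b)
      (((hfyyc.sub hc'c).mul hy2c).intervalIntegrable a b)
    intro x hx
    have h := hq.2 (Set.mem_image_of_mem _ hx)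
    rw [(hasDerivAt_fyz_line hZd x).deriv] at h
    exact mul_le_mul_of_nonneg_right h (sq_nonneg _)
  have hpbound : p * s ≤ ∫ x in a..b, fzz f x 0 0 * (deriv y x) ^ 2 := by
    rw [hsdef, ← intervalIntegral.integral_const_mul]
    apply intervalIntegral.integral_mono_on hab.le
      ((continuous_const.mul hy'2c).intervalIntegrable a b)
      ((hfzzc.mul hy'2c).intervalIntegrable a b)
    intro x hx
    exact mul_le_mul_of_nonneg_right (hp.2 (Set.mem_image_of_mem _ hx)) (sq_nonneg _)
  -- value of the full lower-bound integral
  have hW4int : ∫ x in a..b, (-(η / 2) * ((y x) ^ 2 + (deriv y x) ^ 2)) = -(η / 2) * (t + s) := by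
    rw [intervalIntegral.integral_const_mul,
      intervalIntegral.integral_add (hy2c.intervalIntegrable a b)
        (hy'2c.intervalIntegrable a b), ← htdef, ← hsdef]
  have hWsplit : (fun x => fy f x 0 0 * y x + fz f x 0 0 * deriv y x
        + 1 / 2 * (fyy f x 0 0 * (y x) ^ 2 + 2 * fyz f x 0 0 * (y x * deriv y x)
          + fzz f x 0 0 * (deriv y x) ^ 2)
        - η / 2 * ((y x) ^ 2 + (deriv y x) ^ 2))
      = fun x => (fy f x 0 0 * y x + fz f x 0 0 * deriv y x)
        + ((1 / 2) * (fyy f x 0 0 * (y x) ^ 2)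
        + ((1 / 2) * (fzz f x 0 0 * (deriv y x) ^ 2)
        + (fyz f x 0 0 * (y x * deriv y x)
        + (-(η / 2) * ((y x) ^ 2 + (deriv y x) ^ 2))))) := by
    funext x; ring
  have hi1 : IntervalIntegrable (fun x => fy f x 0 0 * y x + fz f x 0 0 * deriv y x)
      volume a b := ((hfyc.mul hyc).add (hfzc.mul hy'c)).intervalIntegrable a b
  have hi2 : IntervalIntegrable (fun x => (1 / 2) * (fyy f x 0 0 * (y x) ^ 2)) volume a b :=
    (continuous_const.mul (hfyyc.mul hy2c)).intervalIntegrable a b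
  have hi3 : IntervalIntegrable (fun x => (1 / 2) * (fzz f x 0 0 * (deriv y x) ^ 2)) volume a b :=
    (continuous_const.mul (hfzzc.mul hy'2c)).intervalIntegrable a b
  have hi4 : IntervalIntegrable (fun x => fyz f x 0 0 * (y x * deriv y x)) volume a b :=
    (hfyzc.mul (hyc.mul hy'c)).intervalIntegrable a b
  have hi5 : IntervalIntegrable (fun x => -(η / 2) * ((y x) ^ 2 + (deriv y x) ^ 2)) volume a b :=
    (continuous_const.mul (hy2c.add hy'2c)).intervalIntegrable a b
  have hWval : ∫ x in a..b, (fy f x 0 0 * y x + fz f x 0 0 * deriv y x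
        + 1 / 2 * (fyy f x 0 0 * (y x) ^ 2 + 2 * fyz f x 0 0 * (y x * deriv y x)
          + fzz f x 0 0 * (deriv y x) ^ 2)
        - η / 2 * ((y x) ^ 2 + (deriv y x) ^ 2))
      = (1 / 2) * (∫ x in a..b, fyy f x 0 0 * (y x) ^ 2)
        + (1 / 2) * (∫ x in a..b, fzz f x 0 0 * (deriv y x) ^ 2)
        - (1 / 2) * (∫ x in a..b, fderiv ℝ (Zu f) (x, 0, 0) (1, 0, 0) * (y x) ^ 2)
        - (η / 2) * (t + s) := by
    rw [hWsplit, intervalIntegral.integral_add hi1 (hi2.add (hi3.add (hi4.add hi5))),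
      intervalIntegral.integral_add hi2 (hi3.add (hi4.add hi5)),
      intervalIntegral.integral_add hi3 (hi4.add hi5),
      intervalIntegral.integral_add hi4 hi5,
      hW1int, hW3int, hW4int,
      intervalIntegral.integral_const_mul, intervalIntegral.integral_const_mul]
    ring
  -- put everything together
  rw [ge_iff_le, hH1, hPhidiff]
  calc (Real.pi ^ 2 * p - 16 * (b - a) ^ 2 * |q|)
        / (2 * (Real.pi ^ 2 + 16 * (b - a) ^ 2)) * (t + s)
      ≤ 1 / 2 * (q * t + p * s) - η / 2 * (t + s) :=
        arith_final p q (b - a) t s η (Real.pi ^ 2) (by linarith) hppos hqneg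
          (by positivity) hπ16 ht0 hs0 hts hηdef
    _ ≤ ∫ x in a..b, (fy f x 0 0 * y x + fz f x 0 0 * deriv y x
          + 1 / 2 * (fyy f x 0 0 * (y x) ^ 2 + 2 * fyz f x 0 0 * (y x * deriv y x)
            + fzz f x 0 0 * (deriv y x) ^ 2)
          - η / 2 * ((y x) ^ 2 + (deriv y x) ^ 2)) := by
        rw [hWval]
        linarith [hqbound, hpbound]
    _ ≤ ∫ x in a..b, (f x (y x) (deriv y x) - f x 0 0) := by
        apply intervalIntegral.integral_mono_on hab.le
        · exact ((((hfyc.mul hyc).add (hfzc.mul hy'c)).add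
            (continuous_const.mul (((hfyyc.mul hy2c).add
              ((continuous_const.mul hfyzc).mul (hyc.mul hy'c))).add
                (hfzzc.mul hy'2c)))).sub
              (continuous_const.mul (hy2c.add hy'2c))).intervalIntegrable a b
        · exact (hdiffc.sub hf00c).intervalIntegrable a b
        · intro x hx
          exact key x hx (y x) (deriv y x)
            (lt_of_le_of_lt (le_max_left _ _) (hsmall x hx))
            (lt_of_le_of_lt (le_max_right _ _) (hsmall x hx))
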